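/- Let D = {2^i : i ∈ ℤ_{≥0}}, let l ≥ 1 and let k be an integer with k > (3l² - 3l + 2)/2. If n is a positive integer such that every 2-coloring of {1,...,n} admits a monochromatic D-diffsequence of length k, then n > l·4^{l-1}; in particular Δ(D,k) ≥ l·4^{l-1}. -/

import Mathlib

/-- The set of powers of two. -/
def D : Set ℕ := {d | ∃ i : ℕ, d = 2 ^ i}

/-- `pos i = ⌈i / 4⌉`. -/
def pos (i : ℕ) : ℕ := (i + 3) / 4

/-- The expansion of a binary string: each `0` becomes `0011`, each `1` becomes `1100`.
For `1 ≤ m`, `s⁽¹⁾_m = s_{⌈m/4⌉}` if `m % 4 ∈ {1,2}` and `1 - s_{⌈m/4⌉}` otherwise. -/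
def expand (s : ℕ → Fin 2) : ℕ → Fin 2 :=
  fun m => if m % 4 = 1 ∨ m % 4 = 2 then s (pos m) else 1 - s (pos m)

/-- `a 0 < a 1 < ⋯ < a (k-1)` is a `D`-diffsequence contained in `{1, …, n}`. -/
def IsDiffseqIn (n k : ℕ) (a : ℕ → ℕ) : Prop :=
  (∀ i < k, 1 ≤ a i ∧ a i ≤ n) ∧
    ∀ i, i + 1 < k → a i < a (i + 1) ∧ a (i + 1) - a i ∈ D

/-- The set of hops of a length-`k` diffsequence `a` with respect to the string `s`:
indices `j` (0-based) with `a (j+1) - a j = 1` and `s (a (j+1)) ≠ s (a j)`. -/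
def hops (s : ℕ → Fin 2) (k : ℕ) (a : ℕ → ℕ) : Finset ℕ :=
  (Finset.range (k - 1)).filter fun j => a (j + 1) = a j + 1 ∧ s (a (j + 1)) ≠ s (a j)

/-- `psi s n h` : the maximum length of a `D`-diffsequence contained in `{1, …, n}`
with at most `h` hops with respect to `s` (0 if there is none). -/
noncomputable def psi (s : ℕ → Fin 2) (n h : ℕ) : ℕ :=
  sSup {k | ∃ a : ℕ → ℕ, IsDiffseqIn n k a ∧ (hops s k a).card ≤ h}


/-- step relation: increasing, gap in D, color changes only at gap-1 steps -/
def Step (s : ℕ → Fin 2) (u v : ℕ) : Prop :=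
  u < v ∧ v - u ∈ D ∧ (s u ≠ s v → v = u + 1)

def nu (x : ℕ) : ℕ := if x % 4 = 2 then 2 else if x % 4 = 3 then 0 else 1
def tau (x : ℕ) : ℕ := if x % 4 = 1 ∨ x % 4 = 2 then 1 else 0

lemma D_one : (1:ℕ) ∈ D := ⟨0, rfl⟩

lemma D_elim {g : ℕ} (hg : g ∈ D) : g = 1 ∨ g = 2 ∨ ∃ t, t ∈ D ∧ g = 4 * t := by
  obtain ⟨i, rfl⟩ := hg
  match i with
  | 0 => exact Or.inl rfl
  | 1 => exact Or.inr (Or.inl rfl)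
  | (i+2) => exact Or.inr (Or.inr ⟨2^i, ⟨i, rfl⟩, by ring⟩)

lemma D_ge_one {g : ℕ} (hg : g ∈ D) : 1 ≤ g := by
  obtain ⟨i, rfl⟩ := hg; exact Nat.one_le_two_pow

lemma finA : ∀ a : Fin 2, a ≠ 1 - a := by decide
lemma finInj : ∀ a b : Fin 2, 1 - a = 1 - b → a = b := by decide
lemma finNe : ∀ a b : Fin 2, a ≠ b → a = 1 - b := by decide

lemma expand_t1 {s : ℕ → Fin 2} {x : ℕ} (h : x % 4 = 1 ∨ x % 4 = 2) :
    expand s x = s (pos x) := if_pos h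

lemma expand_t2 {s : ℕ → Fin 2} {x : ℕ} (h : ¬(x % 4 = 1 ∨ x % 4 = 2)) :
    expand s x = 1 - s (pos x) := if_neg h

lemma nu_le (x : ℕ) : nu x ≤ 2 := by unfold nu; split_ifs <;> omega
lemma tau_le (x : ℕ) : tau x ≤ 1 := by unfold tau; split_ifs <;> omega

lemma step_facts (s : ℕ → Fin 2) {x y : ℕ} (hR : Step (expand s) x y) :
    (pos x = pos y ∨
      (pos x < pos y ∧ (pos y - pos x) ∈ D ∧ (s (pos x) ≠ s (pos y) → pos y = pos x + 1)))
    ∧ nu x + (if pos x = pos y then 1 else 0)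
        ≤ nu y + 3 * (if expand s x = expand s y then 0 else 1)
    ∧ (if pos x = pos y then 0 else if s (pos x) = s (pos y) then 0 else 1) + tau x
        ≤ (if expand s x = expand s y then 0 else 1) + tau y := by
  obtain ⟨hlt, hD, himp⟩ := hR
  rcases D_elim hD with h1 | h2 | ⟨t, htD, hgt⟩
  · -- gap 1
    have hy : y = x + 1 := by omega
    have h4 : x % 4 = 0 ∨ x % 4 = 1 ∨ x % 4 = 2 ∨ x % 4 = 3 := by omega
    rcases h4 with h | h | h | h
    · -- (0,1) cross
      have hy4 : y % 4 = 1 := by omega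
      have hp : pos y = pos x + 1 := by unfold pos; omega
      have hnx : nu x = 1 := by simp [nu, h]
      have hny : nu y = 1 := by simp [nu, hy4]
      have htx : tau x = 0 := by simp [tau, h]
      have hty : tau y = 1 := by simp [tau, hy4]
      have hne : pos x ≠ pos y := by omega
      refine ⟨Or.inr ⟨by omega, by rw [hp]; simpa using D_one, fun _ => hp⟩, ?_, ?_⟩
      · rw [hnx, hny, if_neg hne]; split_ifs <;> omega
      · rw [htx, hty, if_neg hne]; split_ifs <;> omega
    · -- (1,2) same block
      have hy4 : y % 4 = 2 := by omega
      have hp : pos y = pos x := by unfold pos; omega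
      have hC : expand s x = expand s y := by
        rw [expand_t1 (Or.inl h), expand_t1 (Or.inr hy4), hp]
      refine ⟨Or.inl hp.symm, ?_, ?_⟩
      · simp [nu, h, hy4, hp.symm, hC]
      · simp [tau, h, hy4, hp.symm, hC]
    · -- (2,3) same block, hop
      have hy4 : y % 4 = 3 := by omega
      have hp : pos y = pos x := by unfold pos; omega
      have hC : expand s x ≠ expand s y := by
        rw [expand_t1 (Or.inr h), expand_t2 (by omega), hp]
        exact finA _
      refine ⟨Or.inl hp.symm, ?_, ?_⟩
      · simp [nu, h, hy4, hp.symm, hC]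
      · simp [tau, h, hy4, hp.symm, hC]
    · -- (3,0) same block
      have hy4 : y % 4 = 0 := by omega
      have hp : pos y = pos x := by unfold pos; omega
      have hC : expand s x = expand s y := by
        rw [expand_t2 (by omega), expand_t2 (by omega), hp]
      refine ⟨Or.inl hp.symm, ?_, ?_⟩
      · simp [nu, h, hy4, hp.symm, hC]
      · simp [tau, h, hy4, hp.symm, hC]
  · -- gap 2
    have hy : y = x + 2 := by omega
    have h4 : x % 4 = 0 ∨ x % 4 = 1 ∨ x % 4 = 2 ∨ x % 4 = 3 := by omega
    rcases h4 with h | h | h | h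
    · -- (0,2) cross
      have hy4 : y % 4 = 2 := by omega
      have hp : pos y = pos x + 1 := by unfold pos; omega
      have hC : expand s x = expand s y := by
        by_contra hne; have := himp hne; omega
      have hB : s (pos y) = 1 - s (pos x) := by
        rw [expand_t2 (by omega), expand_t1 (Or.inr hy4)] at hC; exact hC.symm
      have hBne : s (pos x) ≠ s (pos y) := by rw [hB]; exact finA _
      refine ⟨Or.inr ⟨by omega, by rw [hp]; simpa using D_one, fun _ => hp⟩, ?_, ?_⟩
      · simp [nu, h, hy4, if_neg (by omega : pos x ≠ pos y), hC]
      · simp [tau, h, hy4, if_neg (by omega : pos x ≠ pos y), hC, if_neg hBne]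
    · -- (1,3) impossible
      exfalso
      have hy4 : y % 4 = 3 := by omega
      have hp : pos y = pos x := by unfold pos; omega
      have hC : expand s x ≠ expand s y := by
        rw [expand_t1 (Or.inl h), expand_t2 (by omega), hp]; exact finA _
      have := himp hC; omega
    · -- (2,0) impossible
      exfalso
      have hy4 : y % 4 = 0 := by omega
      have hp : pos y = pos x := by unfold pos; omega
      have hC : expand s x ≠ expand s y := by
        rw [expand_t1 (Or.inr h), expand_t2 (by omega), hp]; exact finA _
      have := himp hC; omega
    · -- (3,1) cross
      have hy4 : y % 4 = 1 := by omega
      have hp : pos y = pos x + 1 := by unfold pos; omega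
      have hC : expand s x = expand s y := by
        by_contra hne; have := himp hne; omega
      have hB : s (pos y) = 1 - s (pos x) := by
        rw [expand_t2 (by omega), expand_t1 (Or.inl hy4)] at hC; exact hC.symm
      have hBne : s (pos x) ≠ s (pos y) := by rw [hB]; exact finA _
      refine ⟨Or.inr ⟨by omega, by rw [hp]; simpa using D_one, fun _ => hp⟩, ?_, ?_⟩
      · simp [nu, h, hy4, if_neg (by omega : pos x ≠ pos y), hC]
      · simp [tau, h, hy4, if_neg (by omega : pos x ≠ pos y), hC, if_neg hBne]
  · -- gap divisible by 4
    have ht1 : 1 ≤ t := D_ge_one htD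
    have hy : y = x + 4 * t := by omega
    have hmod : y % 4 = x % 4 := by omega
    have hp : pos y = pos x + t := by unfold pos; omega
    have hC : expand s x = expand s y := by
      by_contra hne; have := himp hne; omega
    have hB : s (pos x) = s (pos y) := by
      by_cases hc : x % 4 = 1 ∨ x % 4 = 2
      · rw [expand_t1 hc, expand_t1 (by omega : y % 4 = 1 ∨ y % 4 = 2)] at hC
        exact hC
      · rw [expand_t2 hc, expand_t2 (by rw [hmod]; exact hc)] at hC
        exact finInj _ _ hC
    have hnu : nu y = nu x := by unfold nu; rw [hmod]
    have htau : tau y = tau x := by unfold tau; rw [hmod]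
    have hne : pos x ≠ pos y := by omega
    refine ⟨Or.inr ⟨by omega, by rw [hp]; simpa using htD, fun hc => absurd hB hc⟩, ?_, ?_⟩
    · rw [hnu, if_neg hne, if_pos hC]
    · rw [htau, if_neg hne, if_pos hC, if_pos hB]

def chg (s : ℕ → Fin 2) : List ℕ → ℕ
  | x :: y :: rest => (if s x = s y then 0 else 1) + chg s (y :: rest)
  | _ => 0

lemma chg_cons_cons (s : ℕ → Fin 2) (x y : ℕ) (r : List ℕ) :
    chg s (x :: y :: r) = (if s x = s y then 0 else 1) + chg s (y :: r) := rfl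

lemma chg_const (s : ℕ → Fin 2) (c : Fin 2) :
    ∀ L : List ℕ, (∀ z ∈ L, s z = c) → chg s L = 0 := by
  intro L
  induction L with
  | nil => intro _; rfl
  | cons x rest ih =>
    intro hc
    cases rest with
    | nil => rfl
    | cons y r =>
      have hx : s x = c := hc x (by simp)
      have hy : s y = c := hc y (by simp)
      have h0 : chg s (y :: r) = 0 := ih (fun z hz => hc z (List.mem_cons_of_mem _ hz))
      rw [chg_cons_cons, h0, if_pos (hx.trans hy.symm)]

lemma key (s : ℕ → Fin 2) (n : ℕ) :
    ∀ (rest : List ℕ) (x : ℕ), List.Chain' (Step (expand s)) (x :: rest) →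
      (∀ z ∈ x :: rest, 1 ≤ z ∧ z ≤ 4 * n) →
      ∃ L' : List ℕ,
        List.Chain' (Step s) (pos x :: L') ∧
        (∀ z ∈ pos x :: L', 1 ≤ z ∧ z ≤ n) ∧
        (x :: rest).length + nu x ≤ (pos x :: L').length + 2 + 3 * chg (expand s) (x :: rest) ∧
        chg s (pos x :: L') + tau x ≤ chg (expand s) (x :: rest) + 1 := by
  intro rest
  induction rest with
  | nil =>
    intro x _ hmem
    refine ⟨[], List.isChain_singleton _, ?_, ?_, ?_⟩
    · intro z hz
      simp at hz
      subst hz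
      have := hmem x (by simp)
      unfold pos; omega
    · have := nu_le x; simp; omega
    · have := tau_le x; simpa [chg] using this
  | cons y rest ih =>
    intro x hch hmem
    unfold List.Chain' at hch; rw [List.isChain_cons_cons] at hch
    obtain ⟨hxy, hch'⟩ := hch
    obtain ⟨L'', hch'', hmem'', hlen'', hchg''⟩ :=
      ih y hch' (fun z hz => hmem z (List.mem_cons_of_mem _ hz))
    obtain ⟨hA, hB, hC⟩ := step_facts s hxy
    by_cases hd : pos x = pos y
    · -- same block: merge
      refine ⟨L'', by rw [hd]; exact hch'', ?_, ?_, ?_⟩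
      · intro z hz
        rcases List.mem_cons.mp hz with h | h
        · subst h; rw [hd]; exact hmem'' (pos y) (by simp)
        · exact hmem'' z (List.mem_cons_of_mem _ h)
      · rw [if_pos hd] at hB
        rw [chg_cons_cons]
        have : (pos x :: L'').length = (pos y :: L'').length := by simp
        simp only [List.length_cons] at *
        split_ifs at hB ⊢ <;> omega
      · rw [if_pos hd] at hC
        have he : chg s (pos x :: L'') = chg s (pos y :: L'') := by rw [hd]
        rw [chg_cons_cons, he]
        split_ifs at hC ⊢ <;> omega
    · -- cross
      rcases hA with h | ⟨hlt, hDd, himp⟩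
      · exact absurd h hd
      refine ⟨pos y :: L'', List.isChain_cons_cons.mpr ⟨⟨hlt, hDd, himp⟩, hch''⟩, ?_, ?_, ?_⟩
      · intro z hz
        rcases List.mem_cons.mp hz with h | h
        · subst h
          have := hmem x (by simp)
          unfold pos; omega
        · exact hmem'' z h
      · rw [if_neg hd] at hB
        rw [chg_cons_cons]
        simp only [List.length_cons] at *
        split_ifs at hB ⊢ <;> omega
      · rw [if_neg hd] at hC
        rw [chg_cons_cons, chg_cons_cons]
        split_ifs at hC ⊢ <;> omega

def Bnd (l : ℕ) : ℕ → ℕ → ℕ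
  | 0, _ => l
  | (j+1), h => Bnd l j (h+1) + 3*h + 2

lemma bnd_val (l : ℕ) : ∀ j h, 2 * Bnd l j h = 2*l + 6*j*h + 3*j*j + j := by
  intro j
  induction j with
  | zero => intro h; simp [Bnd]
  | succ j ih =>
    intro h
    show 2 * (Bnd l j (h+1) + 3*h + 2) = _
    rw [Nat.mul_add, Nat.mul_add, ih (h+1)]
    ring

lemma asc (m : ℕ) : ∀ (L : List ℕ) (x : ℕ), List.Chain' (· < ·) (x :: L) →
    (∀ z ∈ x :: L, z ≤ m) → (x :: L).length + x ≤ m + 1 := by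
  intro L
  induction L with
  | nil =>
    intro x _ hm
    have := hm x (by simp)
    simp; omega
  | cons y rest ih =>
    intro x hch hm
    unfold List.Chain' at hch; rw [List.isChain_cons_cons] at hch
    have := ih y hch.2 (fun z hz => hm z (List.mem_cons_of_mem _ hz))
    simp only [List.length_cons] at *
    omega

lemma main (l : ℕ) : ∀ (j : ℕ) (s : ℕ → Fin 2) (L : List ℕ) (h : ℕ),
    List.Chain' (Step (expand^[j] s)) L →
    (∀ z ∈ L, 1 ≤ z ∧ z ≤ l * 4 ^ j) →
    chg (expand^[j] s) L ≤ h → L.length ≤ Bnd l j h := by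
  intro j
  induction j with
  | zero =>
    intro s L h hch hmem _
    cases L with
    | nil => exact Nat.zero_le _
    | cons x rest =>
      have hch2 : List.Chain' (· < ·) (x :: rest) :=
        List.IsChain.imp (fun a b hab => hab.1) hch
      have := asc (l * 4 ^ 0) (rest) x hch2 (fun z hz => (hmem z hz).2)
      have hx1 := (hmem x (by simp)).1
      show (x :: rest).length ≤ Bnd l 0 h
      simp [Bnd]
      simp at this
      omega
  | succ j ih =>
    intro s L h hch hmem hchg
    cases L with
    | nil => exact Nat.zero_le _
    | cons x rest =>
      rw [Function.iterate_succ_apply'] at hch hchg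
      have hmem4 : ∀ z ∈ x :: rest, 1 ≤ z ∧ z ≤ 4 * (l * 4 ^ j) := by
        intro z hz
        have h1 := hmem z hz
        have h2 : l * 4 ^ (j+1) = 4 * (l * 4 ^ j) := by rw [pow_succ]; ring
        omega
      obtain ⟨L', hch', hmem', hlen', hchg'⟩ :=
        key (expand^[j] s) (l * 4 ^ j) rest x hch hmem4
      have hk : chg (expand^[j] s) (pos x :: L') ≤ h + 1 := by omega
      have hb := ih s (pos x :: L') (h+1) hch' hmem' hk
      show (x :: rest).length ≤ Bnd l (j+1) h
      show (x :: rest).length ≤ Bnd l j (h+1) + 3*h + 2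
      omega


set_option linter.unusedVariables false in
theorem stmt_9 (l k n : ℕ) (hl : 1 ≤ l) (hk : (3 * l ^ 2 - 3 * l + 2) / 2 < k) (hn : 1 ≤ n)
    (H : ∀ χ : ℕ → Fin 2, ∃ a : ℕ → ℕ, IsDiffseqIn n k a ∧ ∃ c : Fin 2, ∀ i < k, χ (a i) = c) :
    l * 4 ^ (l - 1) < n := by
  by_contra hcon
  push_neg at hcon
  have hll : l ≤ l ^ 2 := by
    have := Nat.one_le_two_pow (n := 1)
    nlinarith [sq_nonneg l]
  obtain ⟨k', rfl⟩ : ∃ k', k = k' + 1 := ⟨k - 1, by omega⟩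
  obtain ⟨a, hseq, c, hmono⟩ := H (expand^[l-1] (fun _ => (0 : Fin 2)))
  set χ : ℕ → Fin 2 := expand^[l-1] (fun _ => (0 : Fin 2)) with hχ
  have hchain : List.Chain' (Step χ) ((List.range (k'+1)).map a) := by
    unfold List.Chain'; rw [List.isChain_map, List.isChain_range_succ]
    intro m hm
    obtain ⟨h1, h2⟩ := hseq.2 m (by omega)
    refine ⟨h1, h2, fun hne => absurd ?_ hne⟩
    rw [hmono m (by omega), hmono (m+1) (by omega)]
  have hmem : ∀ z ∈ (List.range (k'+1)).map a, 1 ≤ z ∧ z ≤ l * 4 ^ (l-1) := by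
    intro z hz
    simp only [List.mem_map, List.mem_range] at hz
    obtain ⟨i, hi, rfl⟩ := hz
    have := hseq.1 i hi
    exact ⟨this.1, le_trans this.2 hcon⟩
  have hchg : chg χ ((List.range (k'+1)).map a) = 0 := by
    apply chg_const χ c
    intro z hz
    simp only [List.mem_map, List.mem_range] at hz
    obtain ⟨i, hi, rfl⟩ := hz
    exact hmono i hi
  have hb := main l (l-1) (fun _ => (0 : Fin 2)) ((List.range (k'+1)).map a) 0
    hchain hmem (le_of_eq hchg)
  rw [List.length_map, List.length_range] at hb
  obtain ⟨m, rfl⟩ : ∃ m, l = m + 1 := ⟨l - 1, by omega⟩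
  have h2b : 2 * Bnd (m+1) m 0 = 3*(m*m) + 3*m + 2 := by
    rw [bnd_val (m+1) m 0]; ring
  have hs1 : (m+1) ^ 2 = m*m + 2*m + 1 := by ring
  rw [hs1] at hk
  simp only [Nat.add_sub_cancel] at hb
  omega
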